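/- Let V be a finite-dimensional vector space over a field and let A, A_1, …, A_m be subspaces of V. Then there exist linear maps f_i : A → V with image of f_i contained in A_i for each 1 ≤ i ≤ m, and a subspace A' of A, such that f_1(x) + f_2(x) + ⋯ + f_m(x) = x for all x ∈ A', and dim A − dim A' ≤ dim(A + A_1 + ⋯ + A_m) − dim(A_1 + ⋯ + A_m). -/

import Mathlib

/-- Given subspaces `A, A 1, …, A m` of a finite-dimensional vector space `V`,
there exist linear maps `f i : A → V` with range contained in `A i`, and a subspace `A'` of `A`,
such that `∑ i, f i x = x` for all `x ∈ A'` and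
`dim A - dim A' ≤ dim (A + A₁ + ⋯ + A_m) - dim (A₁ + ⋯ + A_m)`. -/
theorem exists_decomposition_identity_on_subspace
    (F V : Type*) [Field F] [AddCommGroup V] [Module F V] [FiniteDimensional F V]
    (m : ℕ) (A : Submodule F V) (Ai : Fin m → Submodule F V) :
    ∃ (f : Fin m → (↥A →ₗ[F] V)) (A' : Submodule F ↥A),
      (∀ i, LinearMap.range (f i) ≤ Ai i) ∧
      (∀ x ∈ A', ∑ i, f i x = (x : V)) ∧
      (Module.finrank F ↥A : ℤ) - Module.finrank F ↥A'
        ≤ (Module.finrank F ↥(A ⊔ ⨆ i, Ai i) : ℤ) - Module.finrank F ↥(⨆ i, Ai i) := by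
  classical
  set T : Submodule F V := ⨆ i, Ai i with hT
  -- the sum map from the product of the Ai's
  set π : (∀ i, ↥(Ai i)) →ₗ[F] V :=
    ∑ i, ((Ai i).subtype).comp (LinearMap.proj i) with hπ
  have hπ_apply : ∀ v, π v = ∑ i, ((v i : V)) := by
    intro v
    simp [hπ, LinearMap.sum_apply]
  have hTle : T ≤ LinearMap.range π := by
    refine iSup_le fun i a ha => ?_
    refine ⟨LinearMap.single F (fun i => ↥(Ai i)) i ⟨a, ha⟩, ?_⟩
    rw [hπ_apply]
    rw [Finset.sum_eq_single i]
    · simp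
    · intro j _ hj; simp [Pi.single_eq_of_ne hj]
    · simp
  -- a linear section of π
  obtain ⟨σ, hσ⟩ := (π.rangeRestrict).exists_rightInverse_of_surjective
    (LinearMap.range_rangeRestrict π)
  have hσ' : ∀ y : ↥(LinearMap.range π), π (σ y) = (y : V) := by
    intro y
    have := congrArg (fun g => g y) hσ
    simpa using congrArg (Subtype.val) this
  -- the subspace A'
  set A' : Submodule F ↥A := Submodule.comap A.subtype T with hA'
  -- projection onto A'
  obtain ⟨C, hC⟩ := Submodule.exists_isCompl A'
  set p : ↥A →ₗ[F] ↥A' := Submodule.linearProjOfIsCompl A' C hC with hp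
  -- inclusion A' → range π
  set ι : ↥A' →ₗ[F] ↥(LinearMap.range π) :=
    { toFun := fun x => ⟨(x : ↥A), hTle x.2⟩
      map_add' := fun x y => rfl
      map_smul' := fun c x => rfl } with hι
  refine ⟨fun i => ((Ai i).subtype).comp ((LinearMap.proj i).comp (σ.comp (ι.comp p))),
    A', ?_, ?_, ?_⟩
  · intro i
    rintro x ⟨y, rfl⟩
    exact (σ (ι (p y)) i).2
  · intro x hx
    have hpx : p x = ⟨x, hx⟩ := Submodule.linearProjOfIsCompl_apply_left hC ⟨x, hx⟩
    have : ∑ i, ((σ (ι (p x)) i : V)) = (x : V) := by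
      rw [← hπ_apply, hσ' (ι (p x)), hpx]
      rfl
    simpa using this
  · have hmap : Submodule.map A.subtype A' = A ⊓ T := Submodule.map_comap_subtype A T
    have hdim : Module.finrank F ↥A' = Module.finrank F ↥(A ⊓ T) := by
      rw [← hmap]
      exact (Submodule.finrank_map_subtype_eq A A').symm
    have hkey := Submodule.finrank_sup_add_finrank_inf_eq A T
    rw [hdim]
    omega
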